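/- Let F be a bounded operator with closed range on a separable Hilbert space such that F − X is Hilbert–Schmidt for some partial isometry X. Let F = U|F| be the polar decomposition. Then F − U is Hilbert–Schmidt. -/

import Mathlib

noncomputable section

/-- The sequence space ℓ² over ℂ. -/
abbrev L2C : Type := lp (fun _ : ℕ => ℂ) 2

/-- The standard orthonormal basis vectors of ℓ². -/
def stdVec (i : ℕ) : L2C := lp.single 2 i 1

/-- A bounded operator between Hilbert spaces is a partial isometry if it is
isometric on the orthogonal complement of its kernel. -/
def IsPartialIsometry {E F : Type*} [NormedAddCommGroup E] [InnerProductSpace ℂ E]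
    [NormedAddCommGroup F] [InnerProductSpace ℂ F] (X : E →L[ℂ] F) : Prop :=
  ∀ v ∈ (LinearMap.ker (X : E →ₗ[ℂ] F))ᗮ, ‖X v‖ = ‖v‖

/-- A bounded operator from ℓ² is Hilbert–Schmidt if the squared norms of the images
of the standard basis vectors are summable. -/
def IsHS {H : Type*} [NormedAddCommGroup H] [InnerProductSpace ℂ H]
    (T : L2C →L[ℂ] H) : Prop := Summable fun i => ‖T (stdVec i)‖ ^ 2

/-- Squared Hilbert–Schmidt norm of a bounded operator from ℓ². -/
def hsNormSq {H : Type*} [NormedAddCommGroup H] [InnerProductSpace ℂ H]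
    (T : L2C →L[ℂ] H) : ℝ := ∑' i, ‖T (stdVec i)‖ ^ 2

/-- `U` is the partial isometry in the polar decomposition `F = U|F|` of `F`:
`U` is a partial isometry with the same kernel as `F`, `U* F = |F|` is positive
and `F = U (U* F)`. -/
def IsPolarDecomp {H : Type*} [NormedAddCommGroup H] [InnerProductSpace ℂ H]
    [CompleteSpace H] (F U : L2C →L[ℂ] H) : Prop :=
  IsPartialIsometry U ∧ LinearMap.ker (U : L2C →ₗ[ℂ] H) = LinearMap.ker (F : L2C →ₗ[ℂ] H) ∧
  (ContinuousLinearMap.adjoint U ∘L F).IsPositive ∧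
  F = U ∘L (ContinuousLinearMap.adjoint U ∘L F)

/-- A pair of projections `(P, Q)` is a Fredholm pair if `ker Q ∩ ran P` and
`ran Q ∩ ker P` are both finite dimensional. -/
def FredholmPair {E : Type*} [NormedAddCommGroup E] [InnerProductSpace ℂ E]
    (P Q : E →L[ℂ] E) : Prop :=
  FiniteDimensional ℂ ↥(LinearMap.ker (Q : E →ₗ[ℂ] E) ⊓ LinearMap.range (P : E →ₗ[ℂ] E)) ∧
  FiniteDimensional ℂ ↥(LinearMap.range (Q : E →ₗ[ℂ] E) ⊓ LinearMap.ker (P : E →ₗ[ℂ] E))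

/-- The index of a Fredholm pair of projections:
`j(P,Q) = dim(ker Q ∩ ran P) - dim(ran Q ∩ ker P)`. -/
def pairIndex {E : Type*} [NormedAddCommGroup E] [InnerProductSpace ℂ E]
    (P Q : E →L[ℂ] E) : ℤ :=
  (Module.finrank ℂ ↥(LinearMap.ker (Q : E →ₗ[ℂ] E) ⊓ LinearMap.range (P : E →ₗ[ℂ] E)) : ℤ) -
  (Module.finrank ℂ ↥(LinearMap.range (Q : E →ₗ[ℂ] E) ⊓ LinearMap.ker (P : E →ₗ[ℂ] E)) : ℤ)

section Aux
open ContinuousLinearMap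

lemma l2_norm_sq (w : L2C) : ‖w‖ ^ 2 = ∑' j, ‖w j‖ ^ 2 := by
  have h := lp.norm_rpow_eq_tsum (p := 2) (by norm_num) w
  simpa using h

lemma l2_summable_sq (w : L2C) : Summable fun j => ‖w j‖ ^ 2 := by
  have h := (lp.memℓp w).summable (p := 2) (by norm_num)
  simpa using h

lemma isHS_of_le {H₁ H₂ : Type*} [NormedAddCommGroup H₁] [InnerProductSpace ℂ H₁]
    [NormedAddCommGroup H₂] [InnerProductSpace ℂ H₂]
    {A : L2C →L[ℂ] H₁} {B : L2C →L[ℂ] H₂} {M : ℝ} (hM : 0 ≤ M)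
    (h : ∀ i, ‖A (stdVec i)‖ ≤ M * ‖B (stdVec i)‖) (hB : IsHS B) : IsHS A := by
  refine Summable.of_nonneg_of_le (fun i => by positivity) (fun i => ?_)
    ((hB.mul_left (M ^ 2)))
  have h1 : ‖A (stdVec i)‖ ^ 2 ≤ (M * ‖B (stdVec i)‖) ^ 2 :=
    pow_le_pow_left₀ (norm_nonneg _) (h i) 2
  calc ‖A (stdVec i)‖ ^ 2 ≤ (M * ‖B (stdVec i)‖) ^ 2 := h1
  _ = M ^ 2 * ‖B (stdVec i)‖ ^ 2 := by ring

lemma IsHS.comp_left {H₁ H₂ : Type*} [NormedAddCommGroup H₁] [InnerProductSpace ℂ H₁]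
    [NormedAddCommGroup H₂] [InnerProductSpace ℂ H₂]
    {A : L2C →L[ℂ] H₁} (hA : IsHS A) (C : H₁ →L[ℂ] H₂) : IsHS (C ∘L A) :=
  isHS_of_le (norm_nonneg C) (fun i => by simpa using C.le_opNorm (A (stdVec i))) hA

lemma isHS_add {H₁ : Type*} [NormedAddCommGroup H₁] [InnerProductSpace ℂ H₁]
    {A B : L2C →L[ℂ] H₁} (hA : IsHS A) (hB : IsHS B) : IsHS (A + B) := by
  refine Summable.of_nonneg_of_le (fun i => by positivity) (fun i => ?_)
    ((hA.add hB).mul_left 2)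
  have h1 : ‖(A + B) (stdVec i)‖ ≤ ‖A (stdVec i)‖ + ‖B (stdVec i)‖ := by
    simpa using norm_add_le _ _
  have h2 : ‖(A + B) (stdVec i)‖ ^ 2 ≤ (‖A (stdVec i)‖ + ‖B (stdVec i)‖) ^ 2 :=
    pow_le_pow_left₀ (norm_nonneg _) h1 2
  nlinarith [sq_nonneg (‖A (stdVec i)‖ - ‖B (stdVec i)‖)]

lemma IsHS.neg {H₁ : Type*} [NormedAddCommGroup H₁] [InnerProductSpace ℂ H₁]
    {A : L2C →L[ℂ] H₁} (hA : IsHS A) : IsHS (-A) := by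
  unfold IsHS at *; simpa using hA

lemma isHS_congr_norm {H₁ H₂ : Type*} [NormedAddCommGroup H₁] [InnerProductSpace ℂ H₁]
    [NormedAddCommGroup H₂] [InnerProductSpace ℂ H₂]
    {A : L2C →L[ℂ] H₁} {B : L2C →L[ℂ] H₂}
    (h : ∀ v, ‖A v‖ = ‖B v‖) (hB : IsHS B) : IsHS A := by
  unfold IsHS at *
  simpa only [h] using hB

end Aux

section Adj
open ContinuousLinearMap

lemma l2_apply_eq_inner (w : L2C) (j : ℕ) : w j = inner (𝕜 := ℂ) (stdVec j) w := by
  rw [stdVec, lp.inner_single_left]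
  simp [RCLike.inner_apply]

lemma adjoint_coord (A : L2C →L[ℂ] L2C) (i j : ℕ) :
    ‖(adjoint A (stdVec i)) j‖ = ‖(A (stdVec j)) i‖ := by
  rw [l2_apply_eq_inner (adjoint A (stdVec i)) j, l2_apply_eq_inner (A (stdVec j)) i,
    adjoint_inner_right]
  exact norm_inner_symm _ _

lemma summable_swap_aux (a : ℕ → ℕ → ℝ) (hnn : ∀ j i, 0 ≤ a j i)
    (hfib : ∀ j, Summable (a j)) (hsum : Summable fun j => ∑' i, a j i) :
    (∀ i, Summable fun j => a j i) ∧ Summable fun i => ∑' j, a j i := by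
  have key : Summable (fun p : ℕ × ℕ => a p.1 p.2) :=
    (summable_prod_of_nonneg (fun p => hnn p.1 p.2)).mpr ⟨hfib, hsum⟩
  have key2 : Summable (fun p : ℕ × ℕ => a p.2 p.1) :=
    (Equiv.prodComm ℕ ℕ).summable_iff.mpr key
  have h3 := (summable_prod_of_nonneg (f := fun p : ℕ × ℕ => a p.2 p.1)
    (fun p => hnn p.2 p.1)).mp key2
  exact h3

lemma isHS_adjoint (A : L2C →L[ℂ] L2C) (hA : IsHS A) : IsHS (adjoint A) := by
  obtain ⟨-, h2⟩ := summable_swap_aux (fun j i => ‖(A (stdVec j)) i‖ ^ 2)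
    (fun j i => by positivity) (fun j => l2_summable_sq _)
    (by
      have : ∀ j, ∑' i, ‖(A (stdVec j)) i‖ ^ 2 = ‖A (stdVec j)‖ ^ 2 :=
        fun j => (l2_norm_sq _).symm
      simpa only [this] using (show Summable fun j => ‖A (stdVec j)‖ ^ 2 from hA))
  have h4 : ∀ i, ∑' j, ‖(A (stdVec j)) i‖ ^ 2 = ‖adjoint A (stdVec i)‖ ^ 2 := by
    intro i
    rw [l2_norm_sq (adjoint A (stdVec i))]
    exact tsum_congr fun j => by rw [adjoint_coord]
  show Summable _
  simpa only [h4] using h2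

end Adj

section CompRight
open ContinuousLinearMap

set_option synthInstance.maxHeartbeats 1000000 in
set_option maxHeartbeats 1000000 in
lemma isHS_comp_right {H : Type*} [NormedAddCommGroup H] [InnerProductSpace ℂ H]
    [CompleteSpace H] {A : L2C →L[ℂ] H} (hA : IsHS A) (B : L2C →L[ℂ] L2C) :
    IsHS (A ∘L B) := by
  set C := adjoint A ∘L A with hCdef
  have hCpos : (0 : L2C →L[ℂ] L2C) ≤ C := by
    rw [nonneg_iff_isPositive]
    have h := (isPositive_one (E := H)).adjoint_conj A
    simpa [hCdef, one_def] using h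
  haveI : NonUnitalContinuousFunctionalCalculus ℝ (L2C →L[ℂ] L2C) IsSelfAdjoint :=
    IsSelfAdjoint.instNonUnitalContinuousFunctionalCalculus
  set S := CFC.sqrt C with hSdef
  have hS0 : (0 : L2C →L[ℂ] L2C) ≤ S := CFC.sqrt_nonneg (a := C)
  have hSsa : IsSelfAdjoint S := hS0.isSelfAdjoint
  have hSS : S ∘L S = C := by
    have h := CFC.sqrt_mul_sqrt_self C hCpos
    rw [mul_def] at h
    exact h
  have key : ∀ v : L2C, ‖S v‖ = ‖A v‖ := by
    intro v
    have e1 : inner (𝕜 := ℂ) (S v) (S v) = inner (𝕜 := ℂ) (A v) (A v) := by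
      calc inner (𝕜 := ℂ) (S v) (S v) = inner (𝕜 := ℂ) (adjoint S (S v)) v :=
            (adjoint_inner_left S v (S v)).symm
      _ = inner (𝕜 := ℂ) ((S ∘L S) v) v := by rw [hSsa.adjoint_eq, comp_apply]
      _ = inner (𝕜 := ℂ) (adjoint A (A v)) v := by rw [hSS, hCdef, comp_apply]
      _ = inner (𝕜 := ℂ) (A v) (A v) := adjoint_inner_left A v (A v)
    have h2 : (‖S v‖ : ℝ) ^ 2 = ‖A v‖ ^ 2 := by
      have := e1
      rw [inner_self_eq_norm_sq_to_K, inner_self_eq_norm_sq_to_K] at this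
      exact_mod_cast this
    rw [← Real.sqrt_sq (norm_nonneg (S v)), ← Real.sqrt_sq (norm_nonneg (A v)), h2]
  have hShs : IsHS S := isHS_congr_norm key hA
  have h1 : IsHS (adjoint B ∘L S) := hShs.comp_left (adjoint B)
  have h2 := isHS_adjoint _ h1
  have h3 : adjoint (adjoint B ∘L S) = S ∘L B := by
    rw [adjoint_comp, adjoint_adjoint, hSsa.adjoint_eq]
  rw [h3] at h2
  exact isHS_congr_norm (fun v => by
    simp only [comp_apply]; exact (key (B v)).symm) h2

end CompRight

section PIso
open ContinuousLinearMap

variable {E H : Type*} [NormedAddCommGroup E] [InnerProductSpace ℂ E] [CompleteSpace E]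
  [NormedAddCommGroup H] [InnerProductSpace ℂ H] [CompleteSpace H]

def projCL (K : Submodule ℂ E) [K.HasOrthogonalProjection] : E →L[ℂ] E :=
  K.subtypeL ∘L K.orthogonalProjection

lemma projCL_mem (K : Submodule ℂ E) [K.HasOrthogonalProjection] (v : E) :
    projCL K v ∈ K := (K.orthogonalProjection v).2

lemma projCL_sub_mem (K : Submodule ℂ E) [K.HasOrthogonalProjection] (v : E) :
    v - projCL K v ∈ Kᗮ := Submodule.sub_starProjection_mem_orthogonal v

lemma projCL_norm_le (K : Submodule ℂ E) [K.HasOrthogonalProjection] (v : E) :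
    ‖projCL K v‖ ≤ ‖v‖ := by
  have h1 : ‖projCL K v‖ = ‖K.orthogonalProjection v‖ := rfl
  rw [h1]
  calc ‖K.orthogonalProjection v‖ ≤ ‖K.orthogonalProjection‖ * ‖v‖ :=
        (K.orthogonalProjection).le_opNorm v
  _ ≤ 1 * ‖v‖ := by
      exact mul_le_mul_of_nonneg_right (K.orthogonalProjection_norm_le) (norm_nonneg v)
  _ = ‖v‖ := one_mul _

lemma projCL_isSelfAdjoint (K : Submodule ℂ E) [CompleteSpace K] :
    IsSelfAdjoint (projCL K) := isSelfAdjoint_starProjection K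

lemma piso_apply_proj (X : E →L[ℂ] H) [CompleteSpace ↥(LinearMap.ker (X : E →ₗ[ℂ] H))] (v : E) :
    X (projCL (LinearMap.ker (X : E →ₗ[ℂ] H))ᗮ v) = X v := by
  have h1 : v - projCL (LinearMap.ker (X : E →ₗ[ℂ] H))ᗮ v ∈ (LinearMap.ker (X : E →ₗ[ℂ] H))ᗮᗮ :=
    projCL_sub_mem _ v
  rw [Submodule.orthogonal_orthogonal] at h1
  have h2 : X (v - projCL (LinearMap.ker (X : E →ₗ[ℂ] H))ᗮ v) = 0 := h1
  rw [map_sub, sub_eq_zero] at h2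
  exact h2.symm

lemma piso_norm_le {X : E →L[ℂ] H} (hX : IsPartialIsometry X)
    [CompleteSpace ↥(LinearMap.ker (X : E →ₗ[ℂ] H))] (v : E) : ‖X v‖ ≤ ‖v‖ := by
  rw [← piso_apply_proj X v, hX _ (projCL_mem _ v)]
  exact projCL_norm_le _ v

lemma piso_adjoint_comp {X : E →L[ℂ] H} (hX : IsPartialIsometry X)
    [CompleteSpace ↥(LinearMap.ker (X : E →ₗ[ℂ] H))] :
    adjoint X ∘L X = projCL (LinearMap.ker (X : E →ₗ[ℂ] H))ᗮ := by
  set M : Submodule ℂ E := (LinearMap.ker (X : E →ₗ[ℂ] H))ᗮ with hM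
  let φ : M →ₗᵢ[ℂ] H :=
    ⟨X.toLinearMap.comp M.subtype, fun m => hX m.1 m.2⟩
  refine ContinuousLinearMap.ext fun v => ?_
  refine ext_inner_right ℂ fun w => ?_
  have e1 : inner (𝕜 := ℂ) ((adjoint X ∘L X) v) w = inner (𝕜 := ℂ) (X v) (X w) := by
    rw [comp_apply]; exact adjoint_inner_left X w (X v)
  rw [e1, ← piso_apply_proj X v, ← piso_apply_proj X w]
  have e2 : inner (𝕜 := ℂ) (X (projCL M v)) (X (projCL M w))
      = inner (𝕜 := ℂ) (projCL M v) (projCL M w) := by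
    have := φ.inner_map_map (M.orthogonalProjection v) (M.orthogonalProjection w)
    exact this
  rw [e2]
  have e3 : w = projCL M w + (w - projCL M w) := by abel
  calc inner (𝕜 := ℂ) (projCL M v) (projCL M w)
      = inner (𝕜 := ℂ) (projCL M v) (projCL M w)
        + inner (𝕜 := ℂ) (projCL M v) (w - projCL M w) := by
        rw [Submodule.inner_right_of_mem_orthogonal (projCL_mem M v) (projCL_sub_mem M w)]
        ring
  _ = inner (𝕜 := ℂ) (projCL M v) w := by rw [← inner_add_right]; congr 1; abel

end PIso

lemma isHS_sub {H₁ : Type*} [NormedAddCommGroup H₁] [InnerProductSpace ℂ H₁]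
    {A B : L2C →L[ℂ] H₁} (hA : IsHS A) (hB : IsHS B) : IsHS (A - B) := by
  rw [sub_eq_add_neg]; exact isHS_add hA hB.neg

section Main
open ContinuousLinearMap

variable {H : Type*} [NormedAddCommGroup H] [InnerProductSpace ℂ H] [CompleteSpace H]

-- closed range constant
lemma closed_range_bound (F : L2C →L[ℂ] H) (hran : IsClosed (Set.range F)) :
    ∃ M : ℝ, 0 ≤ M ∧ ∀ w, ‖projCL (LinearMap.ker (F : L2C →ₗ[ℂ] H))ᗮ w‖ ≤ M * ‖F w‖ := by
  haveI : CompleteSpace ↥(LinearMap.ker (F : L2C →ₗ[ℂ] H)) := (isClosed_ker F).completeSpace_coe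
  set N : Submodule ℂ L2C := (LinearMap.ker (F : L2C →ₗ[ℂ] H))ᗮ with hN
  haveI : CompleteSpace ↥N := (Submodule.isClosed_orthogonal _).completeSpace_coe
  set R : Submodule ℂ H := LinearMap.range (F : L2C →ₗ[ℂ] H) with hR
  have hRc : IsClosed (R : Set H) := by
    have : (R : Set H) = Set.range F := LinearMap.coe_range _
    rwa [this]
  haveI : CompleteSpace ↥R := hRc.completeSpace_coe
  set g : ↥N →L[ℂ] ↥R :=
    (F ∘L N.subtypeL).codRestrict R (fun x => LinearMap.mem_range_self _ _) with hg
  have hinj : LinearMap.ker (g : ↥N →ₗ[ℂ] ↥R) = ⊥ := by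
    rw [Submodule.eq_bot_iff]
    rintro ⟨x, hx⟩ hker
    have h0 : F x = 0 := by
      have := congrArg (Subtype.val) (hker : g ⟨x, hx⟩ = 0)
      exact this
    have hx0 : x = 0 := by
      have h1 : inner (𝕜 := ℂ) x x = 0 := hx x h0 |>.symm ▸ (hx x h0)
      exact inner_self_eq_zero.mp (hx x h0)
    simpa using hx0
  have hsurj : LinearMap.range (g : ↥N →ₗ[ℂ] ↥R) = ⊤ := by
    rw [LinearMap.range_eq_top]
    rintro ⟨y, hy⟩
    obtain ⟨x, hx⟩ := hy
    refine ⟨N.orthogonalProjection x, ?_⟩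
    apply Subtype.ext
    have : F ((N.orthogonalProjection x : L2C)) = F x := piso_apply_proj F x
    exact this.trans hx
  set e := ContinuousLinearEquiv.ofBijective g hinj hsurj with he
  refine ⟨‖(e.symm : ↥R →L[ℂ] ↥N)‖, norm_nonneg _, fun w => ?_⟩
  set u : ↥N := N.orthogonalProjection w with hu
  have hval : ((e u : ↥R) : H) = F w := by
    have : F ((u : L2C)) = F w := piso_apply_proj F w
    exact this
  have h1 : ‖projCL N w‖ = ‖u‖ := rfl
  rw [h1]
  calc ‖u‖ = ‖e.symm (e u)‖ := by rw [e.symm_apply_apply]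
  _ ≤ ‖(e.symm : ↥R →L[ℂ] ↥N)‖ * ‖e u‖ := (e.symm : ↥R →L[ℂ] ↥N).le_opNorm (e u)
  _ = ‖(e.symm : ↥R →L[ℂ] ↥N)‖ * ‖F w‖ := by
      congr 1
      rw [show ‖e u‖ = ‖((e u : ↥R) : H)‖ from rfl, hval]

end Main

section Main2
open ContinuousLinearMap

lemma projCL_congr {E : Type*} [NormedAddCommGroup E] [InnerProductSpace ℂ E]
    (K K' : Submodule ℂ E) [CompleteSpace K] [CompleteSpace K'] (h : K = K') :
    projCL K = projCL K' := by subst h; rfl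


set_option maxHeartbeats 2000000 in
/-- If `F` has closed range and `F - X` is Hilbert–Schmidt for some partial isometry
`X`, then `F - U` is Hilbert–Schmidt, where `F = U|F|` is the polar decomposition. -/
theorem stmt_10 {H : Type*} [NormedAddCommGroup H] [InnerProductSpace ℂ H]
    [CompleteSpace H] (F U X : L2C →L[ℂ] H)
    (hran : IsClosed (Set.range F)) (hpolar : IsPolarDecomp F U)
    (hX : IsPartialIsometry X) (hhs : IsHS (F - X)) :
    IsHS (F - U) := by
  obtain ⟨hUpi, hker, hTpos, hUF⟩ := hpolar
  haveI : CompleteSpace ↥(LinearMap.ker (F : L2C →ₗ[ℂ] H)) := (isClosed_ker F).completeSpace_coe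
  haveI : CompleteSpace ↥(LinearMap.ker (U : L2C →ₗ[ℂ] H)) := (isClosed_ker U).completeSpace_coe
  haveI : CompleteSpace ↥(LinearMap.ker (X : L2C →ₗ[ℂ] H)) := (isClosed_ker X).completeSpace_coe
  haveI : CompleteSpace ↥(LinearMap.ker (F : L2C →ₗ[ℂ] H))ᗮ :=
    (Submodule.isClosed_orthogonal _).completeSpace_coe
  haveI : CompleteSpace ↥(LinearMap.ker (X : L2C →ₗ[ℂ] H))ᗮ :=
    (Submodule.isClosed_orthogonal _).completeSpace_coe
  set T : L2C →L[ℂ] L2C := ContinuousLinearMap.adjoint U ∘L F with hT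
  set P : L2C →L[ℂ] L2C := projCL (LinearMap.ker (F : L2C →ₗ[ℂ] H))ᗮ with hP
  set Q : L2C →L[ℂ] L2C := projCL (LinearMap.ker (X : L2C →ₗ[ℂ] H))ᗮ with hQ
  have hTsa : IsSelfAdjoint T := hTpos.isSelfAdjoint
  -- kernel facts
  have hsubF : ∀ v : L2C, v - P v ∈ LinearMap.ker (F : L2C →ₗ[ℂ] H) := by
    intro v
    have h := projCL_sub_mem (LinearMap.ker (F : L2C →ₗ[ℂ] H))ᗮ v
    rwa [Submodule.orthogonal_orthogonal] at h
  have hsubX : ∀ v : L2C, v - Q v ∈ LinearMap.ker (X : L2C →ₗ[ℂ] H) := by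
    intro v
    have h := projCL_sub_mem (LinearMap.ker (X : L2C →ₗ[ℂ] H))ᗮ v
    rwa [Submodule.orthogonal_orthogonal] at h
  have hFP : ∀ v, F (P v) = F v := fun v => piso_apply_proj F v
  have hUP : ∀ v, U (P v) = U v := by
    intro v
    have h : v - P v ∈ LinearMap.ker (U : L2C →ₗ[ℂ] H) := by rw [hker]; exact hsubF v
    have h2 : U (v - P v) = 0 := h
    rw [map_sub, sub_eq_zero] at h2
    exact h2.symm
  have hXQ : ∀ v, X (Q v) = X v := fun v => piso_apply_proj X v
  have hTP : ∀ v, T (P v) = T v := by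
    intro v; rw [hT, comp_apply, comp_apply, hFP]
  have hUU : adjoint U ∘L U = P := by
    rw [piso_adjoint_comp hUpi, hP]
    exact projCL_congr _ _ (by rw [hker])
  have hXX : adjoint X ∘L X = Q := piso_adjoint_comp hX
  have hQv : ∀ v, adjoint X (X v) = Q v := by
    intro v
    have := congrArg (fun (A : L2C →L[ℂ] L2C) => A v) hXX
    simpa using this
  have hPv : ∀ v, adjoint U (U v) = P v := by
    intro v
    have := congrArg (fun (A : L2C →L[ℂ] L2C) => A v) hUU
    simpa using this
  have hFv : ∀ v, F v = U (T v) := by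
    intro v
    have := congrArg (fun (A : L2C →L[ℂ] H) => A v) hUF
    simpa using this
  -- Step A : pointwise bound for F - U
  have stepA : ∀ v, ‖(F - U) v‖ ≤ 1 * ‖(T - P) v‖ := by
    intro v
    have h1 : (F - U) v = U ((T - P) v) := by
      rw [sub_apply, sub_apply, map_sub, hUP, hFv]
    rw [h1, one_mul]
    exact piso_norm_le hUpi _
  -- Step B : pointwise bound for T - P
  have hlow : ∀ w : L2C, ‖w‖ ≤ ‖w + T w‖ := by
    intro w
    rcases eq_or_ne w 0 with h | h
    · simp [h]
    have h2 : (‖w‖ : ℝ) ^ 2 = RCLike.re (inner (𝕜 := ℂ) w w) := by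
      rw [inner_self_eq_norm_sq]
    have h3 : RCLike.re (inner (𝕜 := ℂ) (w + T w) w)
        = RCLike.re (inner (𝕜 := ℂ) w w) + RCLike.re (inner (𝕜 := ℂ) (T w) w) := by
      rw [inner_add_left, map_add]
    have h4 : 0 ≤ RCLike.re (inner (𝕜 := ℂ) (T w) w) := hTpos.re_inner_nonneg_left w
    have h5 : RCLike.re (inner (𝕜 := ℂ) (w + T w) w) ≤ ‖w + T w‖ * ‖w‖ :=
      (RCLike.re_le_norm _).trans (norm_inner_le_norm _ _)
    have hw : 0 < ‖w‖ := norm_pos_iff.mpr h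
    nlinarith
  have stepB : ∀ v, ‖(T - P) v‖ ≤ 1 * ‖(T ∘L T - P) v‖ := by
    intro v
    have h1 : (T - P) v + T ((T - P) v) = (T ∘L T - P) v := by
      simp only [sub_apply, comp_apply, map_sub, hTP]
      abel
    rw [one_mul, ← h1]
    exact hlow _
  -- Step C : IsHS (T ∘L T - P)
  have hT2 : ∀ v, T (T v) = adjoint F (F v) := by
    intro v
    conv_rhs => rw [hUF]
    rw [adjoint_comp, hTsa.adjoint_eq]
    simp only [comp_apply]
    rw [hPv, hTP]
  have h1 : IsHS (adjoint F ∘L (F - X)) := hhs.comp_left (adjoint F)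
  have h2 : IsHS (adjoint X ∘L (F - X)) := hhs.comp_left (adjoint X)
  have h2' : IsHS (adjoint (adjoint X ∘L (F - X))) := isHS_adjoint _ h2
  have hD0 : IsHS (adjoint F ∘L F - adjoint X ∘L X) := by
    have heq : adjoint F ∘L (F - X) + adjoint (adjoint X ∘L (F - X))
        = adjoint F ∘L F - adjoint X ∘L X := by
      rw [adjoint_comp, adjoint_adjoint, map_sub]
      ext v
      simp only [comp_apply, ContinuousLinearMap.add_apply, sub_apply, map_sub]
      abel
    rw [← heq]
    exact isHS_add h1 h2'
  -- E1 : Q ∘L (1 - P)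
  have hE1 : IsHS (Q ∘L (1 - P)) := by
    have heq : Q ∘L (1 - P) = adjoint X ∘L (-((F - X) ∘L (1 - P))) := by
      refine ContinuousLinearMap.ext fun v => ?_
      show Q ((1 - P) v) = adjoint X (-((F - X) ((1 - P) v)))
      rw [← hQv ((1 - P) v)]
      congr 1
      simp only [sub_apply, one_apply_eq_self]
      have h0 : F (v - P v) = 0 := hsubF v
      rw [h0, zero_sub, neg_neg]
    rw [heq]
    exact ((isHS_comp_right hhs (1 - P)).neg).comp_left (adjoint X)
  -- E2' : P ∘L (1 - Q)
  obtain ⟨M, hM0, hMb⟩ := closed_range_bound F hran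
  have hE2' : IsHS (P ∘L (1 - Q)) := by
    refine isHS_of_le hM0 (fun i => ?_) (isHS_comp_right hhs (1 - Q))
    simp only [comp_apply]
    set w : L2C := (1 - Q) (stdVec i) with hw
    have h0 : X w = 0 := by
      rw [hw]
      simp only [sub_apply, one_apply]
      exact hsubX (stdVec i)
    have hFK : F w = (F - X) w := by rw [sub_apply, h0, sub_zero]
    rw [← hFK, hP]
    exact hMb w
  have hE2 : IsHS ((1 - Q) ∘L P) := by
    have h := isHS_adjoint _ hE2'
    have heq : adjoint (P ∘L (1 - Q)) = (1 - Q) ∘L P := by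
      rw [adjoint_comp]
      have hQsa : IsSelfAdjoint ((1 : L2C →L[ℂ] L2C) - Q) :=
        (IsSelfAdjoint.one (L2C →L[ℂ] L2C)).sub (projCL_isSelfAdjoint _)
      rw [hQsa.adjoint_eq, (projCL_isSelfAdjoint _).adjoint_eq]
    rwa [heq] at h
  have hQP : IsHS (Q - P) := by
    have heq : Q - P = Q ∘L (1 - P) - (1 - Q) ∘L P := by
      ext v
      simp only [sub_apply, comp_apply, one_apply_eq_self, map_sub]
      abel
    rw [heq]
    exact isHS_sub hE1 hE2
  have hC : IsHS (T ∘L T - P) := by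
    have heq : T ∘L T - P = (adjoint F ∘L F - adjoint X ∘L X) + (Q - P) := by
      ext v
      simp only [sub_apply, comp_apply, ContinuousLinearMap.add_apply, hT2, hQv]
      abel
    rw [heq]
    exact isHS_add hD0 hQP
  -- conclude
  have hTPhs : IsHS (T - P) :=
    isHS_of_le (B := T ∘L T - P) (by norm_num) (fun i => stepB (stdVec i)) hC
  exact isHS_of_le (B := T - P) (by norm_num) (fun i => stepA (stdVec i)) hTPhs


end Main2

end
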